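/- Let ℓ be a prime and F a finite field of characteristic ℓ. Let G be a finite group, N a normal subgroup of G which is an ℓ-group, such that the quotient C = G/N is cyclic and #C divides #F − 1. Let V be an F-vector space of dimension r on which G acts F-linearly via a representation ρ : G → GL(V), and let χ_0 : G → F^× be a group homomorphism with kernel exactly N. Then there exists a chain of G-stable subspaces 0 = V_0 ⊆ V_1 ⊆ ⋯ ⊆ V_r = V with dim_F V_s = s for 0 ≤ s ≤ r, and for each 1 ≤ s ≤ r an integer i_s with 0 ≤ i_s < #C, such that ρ(g)v − χ_0(g)^{i_s}·v ∈ V_{s−1} for all g ∈ G and v ∈ V_s. -/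

import Mathlib

open Module Polynomial

lemma rt_fixed (ℓ : ℕ) (hℓ : ℓ.Prime)
    (F : Type) [Field F] [Fintype F] [CharP F ℓ]
    (G : Type) [Group G] [Finite G]
    (N : Subgroup G) (hN : IsPGroup ℓ N)
    (V : Type) [AddCommGroup V] [Module F V] [FiniteDimensional F V]
    [Nontrivial V]
    (ρ : G →* (V →ₗ[F] V)) :
    ∃ v : V, v ≠ 0 ∧ ∀ g ∈ N, ρ g v = v := by
  haveI : Fact ℓ.Prime := ⟨hℓ⟩
  letI : MulAction N V := MulAction.compHom V (ρ.comp N.subtype)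
  haveI : Finite V := Module.finite_of_finite F
  have hmod := IsPGroup.card_modEq_card_fixedPoints hN V
  haveI : Fintype V := Fintype.ofFinite V
  have hcard : Nat.card V = Fintype.card F ^ finrank F V := by
    rw [Nat.card_eq_fintype_card, card_eq_pow_finrank (K := F) (V := V)]
  obtain ⟨n, hp, hF⟩ := FiniteField.card F ℓ
  have hdvd : ℓ ∣ Nat.card V := by
    rw [hcard, hF]
    have h1 : 1 ≤ finrank F V := Module.finrank_pos
    exact dvd_pow (dvd_pow_self ℓ n.ne_zero) (by positivity)
  have h0 : (0 : V) ∈ MulAction.fixedPoints N V := by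
    intro g
    show (ρ.comp N.subtype g) • (0:V) = 0
    exact map_zero _
  by_contra hcon
  push_neg at hcon
  have hfix : MulAction.fixedPoints N V = {0} := by
    apply Set.eq_singleton_iff_unique_mem.2
    refine ⟨h0, fun v hv => ?_⟩
    by_contra hv0
    obtain ⟨g, hgN, hgv⟩ := hcon v hv0
    exact hgv (hv ⟨g, hgN⟩)
  have : Nat.card (MulAction.fixedPoints N V) = 1 := by
    rw [hfix]; simp
  rw [this] at hmod
  have h01 := ((Nat.modEq_zero_iff_dvd.2 hdvd).symm.trans hmod)
  unfold Nat.ModEq at h01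
  rw [Nat.zero_mod, Nat.mod_eq_of_lt hℓ.one_lt] at h01
  exact absurd h01 (by norm_num)

lemma rt_eigenline (ℓ : ℕ) (hℓ : ℓ.Prime)
    (F : Type) [Field F] [Fintype F] [CharP F ℓ]
    (G : Type) [Group G] [Finite G]
    (N : Subgroup G) [N.Normal] (hN : IsPGroup ℓ N)
    (hcyc : IsCyclic (G ⧸ N))
    (V : Type) [AddCommGroup V] [Module F V] [FiniteDimensional F V]
    [Nontrivial V]
    (ρ : G →* (V →ₗ[F] V))
    (χ₀ : G →* Fˣ) (hχ₀ : χ₀.ker = N) :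
    ∃ (w : V) (i : ℕ), w ≠ 0 ∧ i < Nat.card (G ⧸ N) ∧
      ∀ g : G, ρ g w = ((χ₀ g : F) ^ i) • w := by
  classical
  set n := Nat.card (G ⧸ N) with hn
  have npos : 0 < n := Nat.card_pos
  obtain ⟨c, hc⟩ := hcyc.exists_generator
  obtain ⟨g₀, rfl⟩ := QuotientGroup.mk_surjective c
  -- fixed submodule
  set K : Submodule F V := ⨅ (g : N), LinearMap.ker (ρ (g:G) - LinearMap.id) with hK
  have memK : ∀ v : V, v ∈ K ↔ ∀ g ∈ N, ρ g v = v := by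
    intro v
    simp only [hK, Submodule.mem_iInf, LinearMap.mem_ker, LinearMap.sub_apply,
      LinearMap.id_apply, sub_eq_zero]
    exact ⟨fun h g hg => h ⟨g, hg⟩, fun h g => h g g.2⟩
  obtain ⟨v₀, hv₀, hv₀fix⟩ := rt_fixed ℓ hℓ F G N hN V ρ
  have hv₀K : v₀ ∈ K := (memK v₀).2 hv₀fix
  have hstabK : ∀ g : G, ∀ v ∈ K, ρ g v ∈ K := by
    intro g v hv
    rw [memK]
    intro x hx
    have h1 : g⁻¹ * x * g ∈ N := Subgroup.Normal.conj_mem' ‹N.Normal› x hx g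
    have := (memK v).1 hv _ h1
    calc ρ x (ρ g v) = ρ (x * g) v := by rw [map_mul]; rfl
    _ = ρ (g * (g⁻¹ * x * g)) v := by group
    _ = ρ g (ρ (g⁻¹ * x * g) v) := by rw [map_mul]; rfl
    _ = ρ g v := by rw [this]
  haveI : Nontrivial K := by
    refine ⟨⟨⟨v₀, hv₀K⟩, 0, ?_⟩⟩
    simp [Subtype.ext_iff, hv₀]
  -- the operator
  set T : Module.End F K := (ρ g₀).restrict (hstabK g₀) with hT
  have hg₀n : g₀ ^ n ∈ N := by
    have : ((g₀ : G ⧸ N)) ^ n = 1 := pow_card_eq_one'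
    rwa [← QuotientGroup.mk_pow, QuotientGroup.eq_one_iff] at this
  have hTn : T ^ n = 1 := by
    rw [hT, Module.End.pow_restrict]
    ext ⟨v, hv⟩
    have hpow : ((ρ g₀) ^ n) v = v := by rw [← map_pow]; exact (memK v).1 hv _ hg₀n
    simpa [LinearMap.restrict_apply, Subtype.ext_iff] using hpow
  have hmin : minpoly F T ∣ (X ^ n - 1 : F[X]) := by
    apply minpoly.dvd
    simp [map_sub, map_pow, aeval_X, hTn]
  -- order of χ₀ g₀
  have hNker : ∀ g ∈ N, χ₀ g = 1 := by
    intro g hg; rw [← hχ₀] at hg; exact hg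
  set φ : G ⧸ N →* Fˣ := QuotientGroup.lift N χ₀ (fun g hg => MonoidHom.mem_ker.mpr (hNker g hg)) with hφ
  have hφinj : Function.Injective φ := by
    rw [injective_iff_map_eq_one]
    intro x hx
    induction x using QuotientGroup.induction_on with
    | H g =>
      rw [hφ, QuotientGroup.lift_mk] at hx
      rw [QuotientGroup.eq_one_iff, ← hχ₀]
      exact hx
  have horder : orderOf (χ₀ g₀) = n := by
    have h1 : φ ((g₀ : G ⧸ N)) = χ₀ g₀ := rfl
    rw [← h1, orderOf_injective φ hφinj, orderOf_eq_card_of_forall_mem_zpowers hc]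
  have hprim : IsPrimitiveRoot ((χ₀ g₀ : F)) n := by
    have := IsPrimitiveRoot.orderOf (χ₀ g₀)
    rw [horder] at this
    exact IsPrimitiveRoot.coe_units_iff.mpr this
  -- splits and eigenvalue
  have hsplit : Splits (X ^ n - 1 : F[X]) := by
    have := Polynomial.X_pow_sub_one_splits hprim
    simpa using this
  have hne : (X ^ n - 1 : F[X]) ≠ 0 := by
    have : ((X:F[X]) ^ n - 1).natDegree = n := by
      simpa using Polynomial.natDegree_X_pow_sub_C (n := n) (r := (1:F))
    intro h
    rw [h] at this
    simp at this
    omega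
  haveI : Module.Finite F (Module.End F K) := by infer_instance
  have hint : IsIntegral F T := IsIntegral.of_finite F T
  have hdeg : (minpoly F T).degree ≠ 0 := by
    have := minpoly.natDegree_pos hint
    intro h
    rw [Polynomial.degree_eq_natDegree (minpoly.ne_zero hint)] at h
    exact_mod_cast (by omega : ¬ ((minpoly F T).natDegree : ℤ) = 0) (by exact_mod_cast h)
  obtain ⟨μ, hμ⟩ := Polynomial.Splits.exists_eval_eq_zero
    (hsplit.of_dvd hne hmin) hdeg
  have hroot : (minpoly F T).IsRoot μ := by simpa using hμ
  have heig := Module.End.hasEigenvalue_of_isRoot hroot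
  obtain ⟨w, hw⟩ := heig.exists_hasEigenvector
  have hμn : μ ^ n = 1 := by
    obtain ⟨q, hq⟩ := hmin
    have := hroot.dvd ⟨q, hq⟩
    simpa [Polynomial.IsRoot, sub_eq_zero] using this
  -- μ is a power of χ₀ g₀
  have hμmem : μ ∈ Polynomial.nthRootsFinset n (1 : F) := (Polynomial.mem_nthRootsFinset npos 1).2 hμn
  have hχn : (χ₀ g₀) ^ n = 1 := by
    rw [← horder]; exact pow_orderOf_eq_one _
  have hinj : Function.Injective (fun j : Fin n => ((χ₀ g₀ : F)) ^ (j : ℕ)) := by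
    intro a b hab
    have h1 : (χ₀ g₀) ^ (a:ℕ) = (χ₀ g₀) ^ (b:ℕ) := Units.ext (by simpa using hab)
    have h2 := pow_injOn_Iio_orderOf (x := χ₀ g₀) (by rw [horder]; exact a.2) (by rw [horder]; exact b.2) h1
    exact Fin.ext h2
  have hScard : (Finset.image (fun j : Fin n => ((χ₀ g₀ : F)) ^ (j : ℕ)) Finset.univ).card = n := by
    rw [Finset.card_image_of_injective _ hinj, Finset.card_univ, Fintype.card_fin]
  have hSsub : (Finset.image (fun j : Fin n => ((χ₀ g₀ : F)) ^ (j : ℕ)) Finset.univ) ⊆ Polynomial.nthRootsFinset n (1 : F) := by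
    intro x hx
    rw [Finset.mem_image] at hx
    obtain ⟨j, _, rfl⟩ := hx
    rw [Polynomial.mem_nthRootsFinset npos 1]
    have h3 : ((χ₀ g₀) ^ (j:ℕ)) ^ n = 1 := by
      rw [← pow_mul, mul_comm, pow_mul, hχn, one_pow]
    have := congrArg (Units.val) h3
    simpa using this
  have hcardle : (Polynomial.nthRootsFinset n (1 : F)).card ≤ n := by
    unfold Polynomial.nthRootsFinset
    exact le_trans (Multiset.toFinset_card_le _) (Polynomial.card_nthRoots n 1)
  have hSeq : (Finset.image (fun j : Fin n => ((χ₀ g₀ : F)) ^ (j : ℕ)) Finset.univ) = Polynomial.nthRootsFinset n (1 : F) :=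
    Finset.eq_of_subset_of_card_le hSsub (by omega)
  rw [← hSeq, Finset.mem_image] at hμmem
  obtain ⟨j, -, hj⟩ := hμmem
  -- eigenvector equation on K, coerced
  have hTw : (ρ g₀) (w : V) = μ • (w : V) := by
    have := hw.apply_eq_smul
    have h2 := congrArg (Subtype.val) this
    simpa [hT, LinearMap.restrict_apply] using h2
  have hwne : (w : V) ≠ 0 := fun h => hw.2 (Subtype.ext h)
  have hpoweig : ∀ m : ℕ, ((ρ g₀) ^ m) (w : V) = (μ ^ m) • (w : V) := by
    intro m
    induction m with
    | zero => simp
    | succ k ih =>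
      rw [pow_succ, pow_succ, Module.End.mul_apply, hTw, map_smul, ih, smul_smul, mul_comm]
  refine ⟨(w : V), j, hwne, j.2, ?_⟩
  intro g
  have hzp := hc ((g : G ⧸ N))
  rw [← mem_powers_iff_mem_zpowers] at hzp
  obtain ⟨m, hm⟩ := hzp
  have hq : ((g₀ ^ m : G) : G ⧸ N) = (g : G ⧸ N) := by
    rw [← hm]; rfl
  have hmem : (g₀ ^ m)⁻¹ * g ∈ N := (QuotientGroup.eq (s := N)).1 hq
  have hgdec : g = g₀ ^ m * ((g₀ ^ m)⁻¹ * g) := by group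
  have hχ : χ₀ g = (χ₀ g₀) ^ m := by
    have h1 : χ₀ ((g₀ ^ m)⁻¹ * g) = 1 := hNker _ hmem
    calc χ₀ g = χ₀ (g₀ ^ m * ((g₀ ^ m)⁻¹ * g)) := by rw [← hgdec]
    _ = (χ₀ g₀) ^ m * χ₀ ((g₀ ^ m)⁻¹ * g) := by rw [map_mul, map_pow]
    _ = (χ₀ g₀) ^ m := by rw [h1, mul_one]
  have hρ : ρ g (w : V) = (μ ^ m) • (w : V) := by
    calc ρ g (w : V) = ρ (g₀ ^ m) (ρ ((g₀ ^ m)⁻¹ * g) (w : V)) := by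
          conv_lhs => rw [hgdec]
          rw [map_mul]; rfl
    _ = ρ (g₀ ^ m) (w : V) := by rw [(memK (w : V)).1 w.2 _ hmem]
    _ = ((ρ g₀) ^ m) (w : V) := by rw [map_pow]
    _ = (μ ^ m) • (w : V) := hpoweig m
  rw [hρ]
  congr 1
  have hχF : (χ₀ g : F) = ((χ₀ g₀ : F)) ^ m := by
    rw [hχ]; exact Units.val_pow_eq_pow_val _ _
  rw [hχF, ← hj, ← pow_mul, ← pow_mul, mul_comm]

lemma rt_comap_rank (F V : Type) [Field F] [AddCommGroup V] [Module F V] [FiniteDimensional F V]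
    (L : Submodule F V) (p : Submodule F (V ⧸ L)) :
    finrank F (p.comap L.mkQ) = finrank F p + finrank F L := by
  have hle : L ≤ p.comap L.mkQ := by
    intro x hx
    rw [Submodule.mem_comap, Submodule.mkQ_apply, (Submodule.Quotient.mk_eq_zero L).2 hx]
    exact p.zero_mem
  have h1 := LinearMap.finrank_range_add_finrank_ker (L.mkQ.comp (p.comap L.mkQ).subtype)
  have hrange : LinearMap.range (L.mkQ.comp (p.comap L.mkQ).subtype) = p := by
    rw [LinearMap.range_comp, Submodule.range_subtype, Submodule.map_comap_eq,
      Submodule.range_mkQ, top_inf_eq]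
  have hker : LinearMap.ker (L.mkQ.comp (p.comap L.mkQ).subtype) = L.comap (p.comap L.mkQ).subtype := by
    rw [LinearMap.ker_comp, Submodule.ker_mkQ]
  rw [hrange, hker] at h1
  rw [← h1, (Submodule.comapSubtypeEquivOfLe hle).finrank_eq]

lemma rt_aux (ℓ : ℕ) (hℓ : ℓ.Prime)
    (F : Type) [Field F] [Fintype F] [CharP F ℓ]
    (G : Type) [Group G] [Finite G]
    (N : Subgroup G) [N.Normal] (hN : IsPGroup ℓ N)
    (hcyc : IsCyclic (G ⧸ N))
    (χ₀ : G →* Fˣ) (hχ₀ : χ₀.ker = N) (r : ℕ) :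
    ∀ (V : Type) [AddCommGroup V] [Module F V] [FiniteDimensional F V]
      (ρ : G →* (V →ₗ[F] V)), Module.finrank F V = r →
    ∃ (W : ℕ → Submodule F V) (i : ℕ → ℕ),
      W 0 = ⊥ ∧ W r = ⊤ ∧
      (∀ s : ℕ, s < r → W s ≤ W (s + 1)) ∧
      (∀ s : ℕ, s ≤ r → Module.finrank F (W s) = s) ∧
      (∀ s : ℕ, s ≤ r → ∀ g : G, ∀ v ∈ W s, ρ g v ∈ W s) ∧
      (∀ s : ℕ, 1 ≤ s → s ≤ r → i s < Nat.card (G ⧸ N)) ∧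
      (∀ s : ℕ, 1 ≤ s → s ≤ r → ∀ g : G, ∀ v ∈ W s,
        ρ g v - ((χ₀ g : F) ^ i s) • v ∈ W (s - 1)) := by
  induction r with
  | zero =>
    intro V _ _ _ ρ hr
    haveI : Subsingleton V := Module.finrank_zero_iff.mp hr
    refine ⟨fun _ => ⊥, fun _ => 0, rfl, ?_, ?_, ?_, ?_, ?_, ?_⟩
    · ext x
      simp [Subsingleton.elim x 0]
    · intro s hs; omega
    · intro s hs
      have : s = 0 := by omega
      subst this
      simp [finrank_bot]
    · intro s hs g v hv
      rw [Submodule.mem_bot] at hv ⊢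
      rw [hv, map_zero]
    · intro s hs1 hs2; omega
    · intro s hs1 hs2; omega
  | succ t ih =>
    intro V _ _ _ ρ hr
    haveI : Nontrivial V := Module.finrank_pos_iff.mp (by rw [hr]; omega)
    obtain ⟨w, i₁, hw0, hi₁, hweq⟩ := rt_eigenline ℓ hℓ F G N hN hcyc V ρ χ₀ hχ₀
    set L : Submodule F V := Submodule.span F {w} with hL
    have hLrank : finrank F L = 1 := finrank_span_singleton hw0
    have hLeq : ∀ g : G, ∀ v ∈ L, ρ g v = ((χ₀ g : F) ^ i₁) • v := by
      intro g v hv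
      rw [hL, Submodule.mem_span_singleton] at hv
      obtain ⟨c, rfl⟩ := hv
      rw [map_smul, hweq g, smul_smul, smul_smul, mul_comm]
    have hLstab : ∀ g : G, L ≤ L.comap (ρ g) := by
      intro g v hv
      rw [Submodule.mem_comap, hLeq g v hv]
      exact L.smul_mem _ hv
    set ρ' : G →* ((V ⧸ L) →ₗ[F] (V ⧸ L)) :=
      { toFun := fun g => Submodule.mapQ L L (ρ g) (hLstab g)
        map_one' := by
          apply Submodule.linearMap_qext
          ext v
          simp [Submodule.mapQ_apply]
        map_mul' := by
          intro a b
          apply Submodule.linearMap_qext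
          ext v
          simp [Submodule.mapQ_apply] } with hρ'
    have hρ'app : ∀ g v, ρ' g (L.mkQ v) = L.mkQ (ρ g v) := by
      intro g v
      rw [hρ']
      simp [Submodule.mapQ_apply]
    have hr' : finrank F (V ⧸ L) = t := by
      have := Submodule.finrank_quotient_add_finrank L
      rw [hLrank, hr] at this
      omega
    obtain ⟨W', i', hW0, hWtop, hchain, hrank, hstab', hibound, hchar⟩ :=
      ih (V ⧸ L) ρ' hr'
    refine ⟨fun s => match s with | 0 => ⊥ | (u+1) => (W' u).comap L.mkQ,
      fun s => match s with | 0 => i₁ | 1 => i₁ | (u+2) => i' (u+1),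
      rfl, ?_, ?_, ?_, ?_, ?_, ?_⟩
    · show (W' t).comap L.mkQ = ⊤
      rw [hWtop, Submodule.comap_top]
    · intro s hs
      match s with
      | 0 => exact bot_le
      | (u+1) =>
        exact Submodule.comap_mono (hchain u (by omega))
    · intro s hs
      match s with
      | 0 => simp [finrank_bot]
      | (u+1) =>
        show finrank F ((W' u).comap L.mkQ) = u + 1
        rw [rt_comap_rank, hLrank, hrank u (by omega)]
    · intro s hs g v hv
      match s, hv with
      | 0, hv =>
        rw [Submodule.mem_bot] at hv ⊢
        rw [hv, map_zero]
      | (u+1), hv =>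
        rw [Submodule.mem_comap] at hv ⊢
        rw [← hρ'app]
        exact hstab' u (by omega) g _ hv
    · intro s hs1 hs2
      match s with
      | 1 => exact hi₁
      | (u+2) => exact hibound (u+1) (by omega) (by omega)
    · intro s hs1 hs2 g v hv
      match s, hv with
      | 1, hv =>
        show ρ g v - ((χ₀ g : F) ^ i₁) • v ∈ (⊥ : Submodule F V)
        rw [Submodule.mem_bot, sub_eq_zero]
        rw [Submodule.mem_comap, hW0, Submodule.mem_bot, Submodule.mkQ_apply,
          Submodule.Quotient.mk_eq_zero] at hv
        exact hLeq g v hv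
      | (u+2), hv =>
        show ρ g v - ((χ₀ g : F) ^ (i' (u+1))) • v ∈ (W' u).comap L.mkQ
        rw [Submodule.mem_comap] at hv ⊢
        have h2 := hchar (u+1) (by omega) (by omega) g (L.mkQ v) hv
        rw [hρ'app] at h2
        have h3 : L.mkQ (ρ g v - ((χ₀ g : F) ^ (i' (u+1))) • v)
            = L.mkQ (ρ g v) - ((χ₀ g : F) ^ (i' (u+1))) • L.mkQ v := by
          rw [map_sub, map_smul]
        rw [h3]
        simpa using h2



/-- (Rasmussen–Tamagawa group-theoretic lemma.) Let `ℓ` be a prime and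
`F` a finite field of characteristic `ℓ`. Let `G` be a finite group, `N ⊴ G` an
`ℓ`-group with `C = G/N` cyclic and `#C ∣ #F − 1`. Let `V` be an `r`-dimensional
`F`-vector space with a linear `G`-action `ρ` and `χ₀ : G → F^×` a character with kernel
`N`. Then there is a chain of `G`-stable subspaces `0 = V_0 ⊆ ⋯ ⊆ V_r = V` with
`dim V_s = s`, and integers `0 ≤ i_s < #C` such that `G` acts on each quotient
`V_s/V_{s−1}` through `χ₀^{i_s}`. -/
theorem rasmussen_tamagawa_group_lemma
    (ℓ : ℕ) (hℓ : ℓ.Prime)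
    (F : Type) [Field F] [Fintype F] [CharP F ℓ]
    (G : Type) [Group G] [Finite G]
    (N : Subgroup G) [N.Normal] (hN : IsPGroup ℓ N)
    (hcyc : IsCyclic (G ⧸ N)) (hdvd : Nat.card (G ⧸ N) ∣ Fintype.card F - 1)
    (V : Type) [AddCommGroup V] [Module F V] [FiniteDimensional F V]
    (r : ℕ) (hr : Module.finrank F V = r)
    (ρ : G →* (V →ₗ[F] V))
    (χ₀ : G →* Fˣ) (hχ₀ : χ₀.ker = N) :
    ∃ (W : ℕ → Submodule F V) (i : ℕ → ℕ),
      W 0 = ⊥ ∧ W r = ⊤ ∧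
      (∀ s : ℕ, s < r → W s ≤ W (s + 1)) ∧
      (∀ s : ℕ, s ≤ r → Module.finrank F (W s) = s) ∧
      (∀ s : ℕ, s ≤ r → ∀ g : G, ∀ v ∈ W s, ρ g v ∈ W s) ∧
      (∀ s : ℕ, 1 ≤ s → s ≤ r → i s < Nat.card (G ⧸ N)) ∧
      (∀ s : ℕ, 1 ≤ s → s ≤ r → ∀ g : G, ∀ v ∈ W s,
        ρ g v - ((χ₀ g : F) ^ i s) • v ∈ W (s - 1)) := by
  exact rt_aux ℓ hℓ F G N hN hcyc χ₀ hχ₀ r V ρ hr
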